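/- The set K = q({[t] : t ∈ ℝ, 0 < t < 2}) ⊆ X is nonempty, open in X, compact, and Hausdorff in the subspace topology. -/

import Mathlib

/-- The additive circle `ℝ/3ℤ`. -/
abbrev CircleThree : Type := AddCircle (3 : ℝ)

/-- The relation `r` on `C = ℝ/3ℤ`: `r x y` iff `x = y`, or there is `t ∈ (0,1)`
with (`x = [t]` and `y = [t+1]`) or (`x = [t+1]` and `y = [t]`). -/
def relAabAb (x y : CircleThree) : Prop :=
  x = y ∨ ∃ t : ℝ, 0 < t ∧ t < 1 ∧
    ((x = (t : CircleThree) ∧ y = ((t + 1 : ℝ) : CircleThree)) ∨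
     (x = ((t + 1 : ℝ) : CircleThree) ∧ y = (t : CircleThree)))

/-- The subset `K = q({[t] : 0 < t < 2})` of `X = C/r`. -/
def Kset : Set (Quot relAabAb) :=
  Quot.mk relAabAb '' ((fun t : ℝ => (t : CircleThree)) '' Set.Ioo 0 2)

lemma coe3_inj {x y : ℝ} (hx : x ∈ Set.Ico (0:ℝ) 3) (hy : y ∈ Set.Ico (0:ℝ) 3)
    (h : (x : CircleThree) = (y : CircleThree)) : x = y := by
  haveI : Fact ((0:ℝ) < 3) := ⟨by norm_num⟩
  exact (AddCircle.coe_eq_coe_iff_of_mem_Ico (p := 3) (a := 0)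
    (by simpa using hx) (by simpa using hy)).mp h

lemma relEquiv : Equivalence relAabAb := by
  constructor
  · exact fun x => Or.inl rfl
  · rintro x y (rfl | ⟨t, ht0, ht1, (⟨rfl, rfl⟩ | ⟨rfl, rfl⟩)⟩)
    · exact Or.inl rfl
    · exact Or.inr ⟨t, ht0, ht1, Or.inr ⟨rfl, rfl⟩⟩
    · exact Or.inr ⟨t, ht0, ht1, Or.inl ⟨rfl, rfl⟩⟩
  · rintro x y z (rfl | ⟨t, ht0, ht1, hxy⟩) h2
    · exact h2
    · rcases h2 with rfl | ⟨s, hs0, hs1, hyz⟩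
      · exact Or.inr ⟨t, ht0, ht1, hxy⟩
      · rcases hxy with ⟨rfl, rfl⟩ | ⟨rfl, rfl⟩ <;>
          rcases hyz with ⟨hy, rfl⟩ | ⟨hy, rfl⟩
        · -- y = [t+1] = [s] : impossible
          exfalso
          have := coe3_inj (x := t + 1) (y := s)
            ⟨by linarith, by linarith⟩ ⟨by linarith, by linarith⟩ hy
          linarith
        · -- y = [t+1] = [s+1]
          have := coe3_inj (x := t + 1) (y := s + 1)
            ⟨by linarith, by linarith⟩ ⟨by linarith, by linarith⟩ hy
          have hts : t = s := by linarith
          subst hts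
          exact Or.inl rfl
        · -- y = [t] = [s]
          have := coe3_inj (x := t) (y := s)
            ⟨le_of_lt ht0, by linarith⟩ ⟨le_of_lt hs0, by linarith⟩ hy
          subst this
          exact Or.inl rfl
        · -- y = [t] = [s+1] : impossible
          exfalso
          have := coe3_inj (x := t) (y := s + 1)
            ⟨le_of_lt ht0, by linarith⟩ ⟨by linarith, by linarith⟩ hy
          linarith

lemma preimage_Kset :
    Quot.mk relAabAb ⁻¹' Kset = (fun t : ℝ => (t : CircleThree)) '' Set.Ioo 0 2 := by
  ext x
  constructor
  · rintro hx
    obtain ⟨c, ⟨t, ht, rfl⟩, hq⟩ := hx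
    have hrel : relAabAb (t : CircleThree) x :=
      relEquiv.eqvGen_iff.mp (Quot.eqvGen_exact hq)
    rcases hrel with h | ⟨s, hs0, hs1, (⟨_, rfl⟩ | ⟨_, rfl⟩)⟩
    · exact ⟨t, ht, h⟩
    · exact ⟨s + 1, ⟨by linarith, by linarith⟩, rfl⟩
    · exact ⟨s, ⟨hs0, by linarith⟩, rfl⟩
  · rintro ⟨t, ht, rfl⟩
    exact ⟨_, ⟨t, ht, rfl⟩, rfl⟩

lemma Kset_eq_image_Icc :
    Kset = Quot.mk relAabAb ''
      ((fun t : ℝ => (t : CircleThree)) '' Set.Icc (1/2 : ℝ) (3/2)) := by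
  apply Set.Subset.antisymm
  · rintro _ ⟨_, ⟨t, ⟨ht1, ht2⟩, rfl⟩, rfl⟩
    rcases lt_or_ge t (1/2) with h | h
    · refine ⟨_, ⟨t + 1, ⟨by linarith, by linarith⟩, rfl⟩, ?_⟩
      exact (Quot.sound (Or.inr ⟨t, ht1, by linarith, Or.inr ⟨rfl, rfl⟩⟩))
    · rcases le_or_gt t (3/2) with h2 | h2
      · exact ⟨_, ⟨t, ⟨h, h2⟩, rfl⟩, rfl⟩
      · refine ⟨_, ⟨t - 1, ⟨by linarith, by linarith⟩, rfl⟩, ?_⟩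
        refine Quot.sound (Or.inr ⟨t - 1, by linarith, by linarith,
          Or.inl ⟨rfl, ?_⟩⟩)
        norm_num
  · exact Set.image_mono (Set.image_mono (fun t ht =>
      ⟨by linarith [ht.1], by linarith [ht.2]⟩))

/-- The natural map `ℝ/3ℤ → ℝ/ℤ`. -/
noncomputable def toUnit : CircleThree →+ AddCircle (1:ℝ) :=
  QuotientAddGroup.lift _ (QuotientAddGroup.mk' (AddSubgroup.zmultiples (1:ℝ))) (by
    intro x hx
    obtain ⟨k, rfl⟩ := AddSubgroup.mem_zmultiples_iff.mp hx
    rw [AddMonoidHom.mem_ker, QuotientAddGroup.mk'_apply, QuotientAddGroup.eq_zero_iff]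
    exact AddSubgroup.mem_zmultiples_iff.mpr ⟨3 * k, by
      push_cast [zsmul_eq_mul]; ring⟩)

lemma toUnit_coe (s : ℝ) : toUnit (s : CircleThree) = (s : AddCircle (1:ℝ)) := rfl

lemma toUnit_continuous : Continuous toUnit := by
  rw [QuotientAddGroup.isOpenQuotientMap_mk.isQuotientMap.continuous_iff]
  exact AddCircle.continuous_mk' 1

lemma toUnit_resp : ∀ a b, relAabAb a b → toUnit a = toUnit b := by
  rintro a b (rfl | ⟨t, ht0, ht1, (⟨rfl, rfl⟩ | ⟨rfl, rfl⟩)⟩)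
  · rfl
  · rw [toUnit_coe, toUnit_coe, AddCircle.coe_add_period]
  · rw [toUnit_coe, toUnit_coe, AddCircle.coe_add_period]

/-- The induced map on the quotient. -/
noncomputable def Phi : Quot relAabAb → AddCircle (1:ℝ) :=
  Quot.lift (⇑toUnit) toUnit_resp

lemma Phi_continuous : Continuous Phi :=
  continuous_quot_lift _ toUnit_continuous

lemma coe1_eq {t s : ℝ} (h : (t : AddCircle (1:ℝ)) = (s : AddCircle (1:ℝ))) :
    ∃ k : ℤ, t - s = k := by
  have h' : t - s ∈ AddSubgroup.zmultiples (1:ℝ) :=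
    (QuotientAddGroup.eq_iff_sub_mem).mp h
  obtain ⟨k, hk⟩ := AddSubgroup.mem_zmultiples_iff.mp h'
  exact ⟨k, by rw [← hk, zsmul_eq_mul, mul_one]⟩

/-- `K = q({[t] : 0 < t < 2}) ⊆ X` is nonempty, open, compact, and
Hausdorff in the subspace topology. -/
theorem stmt_4 :
    Kset.Nonempty ∧ IsOpen Kset ∧ IsCompact Kset ∧ T2Space ↥Kset := by
  refine ⟨⟨_, ⟨_, ⟨1, ⟨one_pos, one_lt_two⟩, rfl⟩, rfl⟩⟩, ?_, ?_, ?_⟩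
  · -- open
    rw [← isQuotientMap_quot_mk.isOpen_preimage, preimage_Kset]
    exact QuotientAddGroup.isOpenMap_coe _ isOpen_Ioo
  · -- compact
    rw [Kset_eq_image_Icc]
    exact ((isCompact_Icc.image (AddCircle.continuous_mk' 3)).image
      continuous_quot_mk)
  · -- Hausdorff
    refine T2Space.of_injective_continuous
      (f := fun x : ↥Kset => Phi x.1) ?_ (Phi_continuous.comp continuous_subtype_val)
    rintro ⟨x, hx⟩ ⟨y, hy⟩ h
    obtain ⟨_, ⟨t, ht, rfl⟩, rfl⟩ := hx
    obtain ⟨_, ⟨s, hs, rfl⟩, rfl⟩ := hy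
    have h' : (t : AddCircle (1:ℝ)) = (s : AddCircle (1:ℝ)) := h
    obtain ⟨k, hk⟩ := coe1_eq h'
    have hk2 : (k : ℝ) < 2 := by
      have := ht.2; have := hs.1; linarith
    have hkm2 : (-2 : ℝ) < k := by
      have := ht.1; have := hs.2; linarith
    have hk2' : k < 2 := by exact_mod_cast hk2
    have hkm2' : (-2 : ℤ) < k := by exact_mod_cast hkm2
    apply Subtype.ext
    interval_cases k
    · -- k = -1 : s = t + 1
      have hst : s = t + 1 := by push_cast at hk; linarith
      subst hst
      exact (Quot.sound (Or.inr ⟨t, ht.1, by linarith [hs.2], Or.inl ⟨rfl, rfl⟩⟩))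
    · -- k = 0 : t = s
      have hst : t = s := by push_cast at hk; linarith
      subst hst
      rfl
    · -- k = 1 : t = s + 1
      have hst : t = s + 1 := by push_cast at hk; linarith
      subst hst
      exact (Quot.sound (Or.inr ⟨s, hs.1, by linarith [ht.2], Or.inr ⟨rfl, rfl⟩⟩))
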